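/- Let H be a finite simple graph on h vertices and T an odd cycle transversal of H. If H² has a vertex cover X of size h + r such that for each v ∈ T, exactly one of (v,1), (v,2) belongs to X, then T' = {v ∈ V(H) : (v,1) ∈ X and (v,2) ∈ X} is an odd cycle transversal of H of size r that is disjoint from T. (Backward direction of Observation 1.) -/

import Mathlib

/-- The graph `G²` on vertex set `V × Bool` (copy 1 = `false`, copy 2 = `true`):
edges `{(u,i),(v,i)}` for every edge `{u,v}` of `G`, plus `{(v,1),(v,2)}` for every `v`. -/
def doubledGraph {V : Type*} (G : SimpleGraph V) : SimpleGraph (V × Bool) where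
  Adj x y := (x.2 = y.2 ∧ G.Adj x.1 y.1) ∨ (x.1 = y.1 ∧ x.2 ≠ y.2)
  symm := ⟨by
    rintro ⟨u, i⟩ ⟨v, j⟩ (⟨h1, h2⟩ | ⟨h1, h2⟩)
    · exact Or.inl ⟨h1.symm, h2.symm⟩
    · exact Or.inr ⟨h1.symm, h2.symm⟩⟩
  loopless := ⟨by
    rintro ⟨u, i⟩ (⟨_, h⟩ | ⟨_, h⟩)
    · exact G.loopless.irrefl u h
    · exact h rfl⟩

/-- `X` is a vertex cover of `G`: it contains an endpoint of every edge. -/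
def IsVertexCover {α : Type*} (G : SimpleGraph α) (X : Set α) : Prop :=
  ∀ ⦃u v : α⦄, G.Adj u v → u ∈ X ∨ v ∈ X

/-- Backward direction of Observation 1: if `H²` has a vertex cover `X` of size `h + r` such
that for each `v ∈ T` exactly one of `(v,1)`, `(v,2)` belongs to `X`, then
`T' = {v | (v,1) ∈ X ∧ (v,2) ∈ X}` is an OCT of `H` of size `r` disjoint from `T`. -/
theorem stmt9 {V : Type*} [Fintype V] (H : SimpleGraph V) (T : Set V)
    (X : Set (V × Bool)) (r : ℕ)
    (hT : (H.induce (Tᶜ : Set V)).Colorable 2)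
    (hX : IsVertexCover (doubledGraph H) X)
    (hcard : X.ncard = Fintype.card V + r)
    (hexact : ∀ v ∈ T, ((v, false) ∈ X ∧ (v, true) ∉ X) ∨
                       ((v, false) ∉ X ∧ (v, true) ∈ X)) :
    (H.induce (({v : V | (v, false) ∈ X ∧ (v, true) ∈ X}ᶜ : Set V))).Colorable 2 ∧
    {v : V | (v, false) ∈ X ∧ (v, true) ∈ X}.ncard = r ∧
    Disjoint {v : V | (v, false) ∈ X ∧ (v, true) ∈ X} T := by
  classical
  set T' : Set V := {v : V | (v, false) ∈ X ∧ (v, true) ∈ X} with hT'def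
  have hcover : ∀ v : V, (v, false) ∈ X ∨ (v, true) ∈ X := by
    intro v
    exact hX (Or.inr ⟨rfl, by simp⟩)
  refine ⟨?_, ?_, ?_⟩
  · -- coloring
    refine ⟨SimpleGraph.Coloring.mk
      (fun v => if ((v : V), false) ∈ X then 1 else 0) ?_⟩
    rintro ⟨u, hu⟩ ⟨v, hv⟩ hadj heq
    simp only [SimpleGraph.comap_adj, Function.Embedding.coe_subtype] at hadj
    simp only [Set.mem_compl_iff, hT'def, Set.mem_setOf_eq, not_and] at hu hv
    by_cases h1 : (u, false) ∈ X
    · by_cases h2 : (v, false) ∈ X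
      · -- both true copies missing
        have hu2 := hu h1
        have hv2 := hv h2
        rcases hX (show (doubledGraph H).Adj (u, true) (v, true) from
          Or.inl ⟨rfl, hadj⟩) with h | h
        · exact hu2 h
        · exact hv2 h
      · simp [h1, h2] at heq
    · by_cases h2 : (v, false) ∈ X
      · simp [h1, h2] at heq
      · rcases hX (show (doubledGraph H).Adj (u, false) (v, false) from
          Or.inl ⟨rfl, hadj⟩) with h | h
        · exact h1 h
        · exact h2 h
  · -- cardinality
    have hXfin : X.Finite := Set.toFinite X
    set Xf : Finset (V × Bool) := hXfin.toFinset with hXf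
    have hXcard : Xf.card = Fintype.card V + r := by
      rw [← hcard, Set.ncard_eq_toFinset_card X hXfin]
    set Tf : Finset V := Finset.univ.filter (fun v => (v, false) ∈ X ∧ (v, true) ∈ X)
      with hTf
    have key : Xf.card = ∑ v : V, (Xf.filter fun a => a.1 = v).card :=
      Finset.card_eq_sum_card_fiberwise (fun x _ => Finset.mem_univ _)
    have fiber : ∀ v : V, (Xf.filter fun a => a.1 = v).card =
        1 + (if v ∈ Tf then 1 else 0) := by
      intro v
      have hbij : (Xf.filter fun a => a.1 = v) =
          (Finset.univ.filter fun b : Bool => (v, b) ∈ X).image (fun b => (v, b)) := by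
        ext ⟨w, b⟩
        simp only [Finset.mem_filter, Finset.mem_image, Finset.mem_univ, true_and,
          hXf, Set.Finite.mem_toFinset]
        constructor
        · rintro ⟨hw, rfl⟩
          exact ⟨b, hw, rfl⟩
        · rintro ⟨c, hc, heq⟩
          cases heq
          exact ⟨hc, rfl⟩
      rw [hbij, Finset.card_image_of_injective _ (fun a b h => by injection h)]
      have : (Finset.univ.filter fun b : Bool => (v, b) ∈ X) =
          ({false, true} : Finset Bool).filter fun b => (v, b) ∈ X := by
        congr 1
        decide
      rw [this]
      rcases hcover v with h | h <;>
        by_cases h2 : (v, true) ∈ X <;>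
        by_cases h1 : (v, false) ∈ X <;>
        simp_all [hTf, Finset.filter_insert, Finset.filter_singleton] <;>
        simp [Tf, Finset.mem_filter, h1, h2]
    have hsum : Xf.card = Fintype.card V + Tf.card := by
      rw [key]
      simp only [fiber]
      rw [Finset.sum_add_distrib]
      simp [Finset.sum_ite_mem, Finset.card_univ, hTf]
    have : Fintype.card V + r = Fintype.card V + Tf.card := by
      rw [← hXcard, hsum]
    have hr : r = Tf.card := Nat.add_left_cancel this
    have : T' = (↑Tf : Set V) := by
      ext v; simp [hTf, hT'def]
    rw [this, Set.ncard_coe_finset, hr]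
  · -- disjoint
    rw [Set.disjoint_left]
    intro v hv hvT
    rcases hexact v hvT with ⟨_, h⟩ | ⟨h, _⟩
    · exact h hv.2
    · exact h hv.1
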